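/- Given two cone points p_h, p_v of a translation surface with cone angles 2π·o_h and 2π·o_v (o_h, o_v positive integers), the point (p_h, p_v) in the product, for any fixed slope-α foliation, lies on exactly gcd(o_h, o_v) distinct local leaves, and on each leaf it is a cone point of order lcm(o_h, o_v); in particular o_h · o_v = lcm(o_h,o_v) · gcd(o_h,o_v) counts leaves times order. -/
import Mathlib

open Pointwise


/-- Combinatorial cone-point count: local leaves near `(p_h,p_v)` are indexed by
pairs `(i_h,i_v) ∈ ℤ/o_h × ℤ/o_v` modulo simultaneous shift. Each shift-orbit
has size `lcm(o_h,o_v)`, there are `gcd(o_h,o_v)` orbits, and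
`o_h · o_v = lcm · gcd`. -/
theorem stmt11 (oh ov : ℕ) (h1 : 0 < oh) (h2 : 0 < ov) :
    (∀ (i : ZMod oh) (j : ZMod ov),
      Nat.card (Set.range fun θ : ℤ =>
        ((i + (θ : ZMod oh), j + (θ : ZMod ov)) : ZMod oh × ZMod ov))
        = Nat.lcm oh ov) ∧
    Nat.card {S : Set (ZMod oh × ZMod ov) | ∃ (i : ZMod oh) (j : ZMod ov),
        S = Set.range fun θ : ℤ => (i + (θ : ZMod oh), j + (θ : ZMod ov))}
      = Nat.gcd oh ov ∧
    oh * ov = Nat.lcm oh ov * Nat.gcd oh ov := by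
  set G := ZMod oh × ZMod ov with hG
  set H : AddSubgroup G := AddSubgroup.zmultiples ((1, 1) : G) with hH
  -- the range is a coset of H
  have key : ∀ (i : ZMod oh) (j : ZMod ov) (θ : ℤ),
      ((i + (θ : ZMod oh), j + (θ : ZMod ov)) : G) = (i, j) + θ • ((1, 1) : G) := by
    intro i j θ
    simp [Prod.ext_iff, zsmul_one]
  have hrange : ∀ (i : ZMod oh) (j : ZMod ov),
      (Set.range fun θ : ℤ => ((i + (θ : ZMod oh), j + (θ : ZMod ov)) : G))
        = ((i, j) : G) +ᵥ (H : Set G) := by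
    intro i j
    ext x
    constructor
    · rintro ⟨θ, rfl⟩
      exact ⟨θ • ((1, 1) : G), AddSubgroup.zsmul_mem H (AddSubgroup.mem_zmultiples _) θ,
        (key i j θ).symm⟩
    · rintro ⟨y, hy, rfl⟩
      obtain ⟨θ, rfl⟩ := AddSubgroup.mem_zmultiples_iff.mp hy
      exact ⟨θ, key i j θ⟩
  -- cardinality of H
  have hcardH : Nat.card H = Nat.lcm oh ov := by
    rw [hH, Nat.card_zmultiples]
    have := Prod.addOrderOf ((1, 1) : G)
    simpa [ZMod.addOrderOf_one] using this
  -- cardinality of a coset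
  have hcoset_card : ∀ g : G, Nat.card (g +ᵥ (H : Set G)) = Nat.lcm oh ov := by
    intro g
    have himg : g +ᵥ (H : Set G) = (fun x => g + x) '' (H : Set G) :=
      (Set.image_vadd).symm
    rw [himg, Nat.card_image_of_injective (add_right_injective g)]
    simpa using hcardH
  have part1 : ∀ (i : ZMod oh) (j : ZMod ov),
      Nat.card (Set.range fun θ : ℤ =>
        ((i + (θ : ZMod oh), j + (θ : ZMod ov)) : G)) = Nat.lcm oh ov := by
    intro i j
    rw [hrange i j]
    exact hcoset_card (i, j)
  refine ⟨part1, ?_, (Nat.gcd_mul_lcm oh ov).symm.trans (Nat.mul_comm _ _)⟩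
  -- the set of cosets
  have hset : {S : Set G | ∃ (i : ZMod oh) (j : ZMod ov),
      S = Set.range fun θ : ℤ => ((i + (θ : ZMod oh), j + (θ : ZMod ov)) : G)}
      = Set.range (fun g : G => g +ᵥ (H : Set G)) := by
    ext S
    constructor
    · rintro ⟨i, j, rfl⟩
      exact ⟨(i, j), (hrange i j).symm⟩
    · rintro ⟨⟨i, j⟩, rfl⟩
      exact ⟨i, j, (hrange i j).symm⟩
  rw [hset]
  -- count cosets via the quotient
  have hinj : Function.Injective
      (fun q : G ⧸ H => Quotient.liftOn' q (fun g => g +ᵥ (H : Set G))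
        (fun a b hab => by
          rw [QuotientAddGroup.leftRel_apply] at hab
          exact (leftAddCoset_eq_iff H).mpr hab)) := by
    intro x y
    induction x using QuotientAddGroup.induction_on with
    | H a =>
      induction y using QuotientAddGroup.induction_on with
      | H b =>
        intro hab
        exact (QuotientAddGroup.eq).mpr ((leftAddCoset_eq_iff H).mp hab)
  have hrange_eq : Set.range (fun g : G => g +ᵥ (H : Set G))
      = Set.range (fun q : G ⧸ H => Quotient.liftOn' q (fun g => g +ᵥ (H : Set G))
        (fun a b hab => by
          rw [QuotientAddGroup.leftRel_apply] at hab
          exact (leftAddCoset_eq_iff H).mpr hab)) := by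
    ext S
    constructor
    · rintro ⟨g, rfl⟩; exact ⟨QuotientAddGroup.mk g, rfl⟩
    · rintro ⟨q, rfl⟩
      induction q using QuotientAddGroup.induction_on with
      | H g => exact ⟨g, rfl⟩
  rw [hrange_eq, Nat.card_range_of_injective hinj]
  -- Nat.card (G ⧸ H) = H.index, and index * card H = card G
  have hlagrange : H.index * Nat.card H = Nat.card G := AddSubgroup.index_mul_card H
  have hcardG : Nat.card G = oh * ov := by
    rw [hG, Nat.card_prod, Nat.card_zmod, Nat.card_zmod]
  rw [← AddSubgroup.index_eq_card]
  have hlcm_pos : 0 < Nat.lcm oh ov := Nat.pos_of_ne_zero (Nat.lcm_ne_zero h1.ne' h2.ne')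
  have : H.index * Nat.lcm oh ov = Nat.gcd oh ov * Nat.lcm oh ov := by
    calc H.index * Nat.lcm oh ov = H.index * Nat.card H := by rw [hcardH]
      _ = Nat.card G := hlagrange
      _ = oh * ov := hcardG
      _ = Nat.gcd oh ov * Nat.lcm oh ov := (Nat.gcd_mul_lcm oh ov).symm
  exact Nat.eq_of_mul_eq_mul_right hlcm_pos this
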